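/- Let 0 ≤ δ < 1 and suppose z, w, z', w' ∈ ℂ satisfy |z|,|w|,|z'|,|w'| ≤ 1 and zw = z'w' = δ². Then there exist piecewise C¹ paths γ_z, γ_w : [0,1] → ℂ with γ_z(0)=z, γ_z(1)=z', γ_w(0)=w, γ_w(1)=w', such that |γ_z(t)| ≤ 1 and |γ_w(t)| ≤ 1 for all t, γ_z(t)·γ_w(t) = δ² for all t, and the sum of the lengths satisfies ℓ(γ_z) + ℓ(γ_w) ≤ 8π·max{|z−z'|, |w−w'|}. -/

import Mathlib

/-- A path `γ : [0,1] → ℂ` is piecewise C¹ if it is continuous on `[0,1]` and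
C¹ on each subinterval of some finite partition of `[0,1]`. -/
def PiecewiseC1On (γ : ℝ → ℂ) : Prop :=
  ContinuousOn γ (Set.Icc 0 1) ∧
  ∃ (m : ℕ) (a : Fin (m + 1) → ℝ), a 0 = 0 ∧ a (Fin.last m) = 1 ∧ Monotone a ∧
    ∀ i : Fin m, ContDiffOn ℝ 1 γ (Set.Icc (a i.castSucc) (a i.succ))

/-- The length of a path `γ : [0,1] → ℂ`: its total variation on `[0,1]`. -/
noncomputable def pathLength (γ : ℝ → ℂ) : ENNReal := eVariationOn γ (Set.Icc 0 1)

open Set Complex NNReal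

lemma glue_contOn {a b c : ℝ} {γ : ℝ → ℂ} (hab : a ≤ b) (hbc : b ≤ c)
    (h1 : ContinuousOn γ (Icc a b)) (h2 : ContinuousOn γ (Icc b c)) :
    ContinuousOn γ (Icc a c) := by
  have hU : Icc a c = Icc a b ∪ Icc b c := (Icc_union_Icc_eq_Icc hab hbc).symm
  rw [hU]
  intro x hx
  apply ContinuousWithinAt.union
  · by_cases hxA : x ∈ Icc a b
    · exact h1 x hxA
    · exact continuousWithinAt_of_notMem_closure (by rwa [isClosed_Icc.closure_eq])
  · by_cases hxB : x ∈ Icc b c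
    · exact h2 x hxB
    · exact continuousWithinAt_of_notMem_closure (by rwa [isClosed_Icc.closure_eq])

lemma evar_le_lip {f : ℝ → ℂ} {a b : ℝ} (hab : a ≤ b) {C : ℝ≥0}
    (h : LipschitzOnWith C f (Icc a b)) :
    eVariationOn f (Icc a b) ≤ (C : ENNReal) * ENNReal.ofReal (b - a) := by
  have h0 : eVariationOn (f ∘ id) (Icc a b) ≤ (C : ENNReal) * eVariationOn (id : ℝ → ℝ) (Icc a b) :=
    h.comp_eVariationOn_le (Set.mapsTo_id _)
  have h1 : eVariationOn (id : ℝ → ℝ) (Icc a b) ≤ ENNReal.ofReal (b - a) := by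
    have := (monotoneOn_id (s := Icc a b)).eVariationOn_le (left_mem_Icc.2 hab)
      (right_mem_Icc.2 hab)
    simpa using this
  exact le_trans h0 (mul_le_mul_right h1 _)

lemma evar_le_deriv {f f' : ℝ → ℂ} {a b C : ℝ} (hab : a ≤ b) (hC : 0 ≤ C)
    (hd : ∀ x ∈ Icc a b, HasDerivWithinAt f (f' x) (Icc a b) x)
    (hb : ∀ x ∈ Icc a b, ‖f' x‖ ≤ C) :
    eVariationOn f (Icc a b) ≤ ENNReal.ofReal (C * (b - a)) := by
  have hlip : LipschitzOnWith C.toNNReal f (Icc a b) := by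
    apply (convex_Icc a b).lipschitzOnWith_of_nnnorm_hasDerivWithin_le hd
    intro x hx
    exact (Real.le_toNNReal_iff_coe_le hC).mpr (hb x hx)
  calc eVariationOn f (Icc a b) ≤ (C.toNNReal : ENNReal) * ENNReal.ofReal (b - a) :=
        evar_le_lip hab hlip
    _ = ENNReal.ofReal C * ENNReal.ofReal (b - a) := rfl
    _ = ENNReal.ofReal (C * (b - a)) := (ENNReal.ofReal_mul hC).symm

lemma evar_mul_mono {c : ℂ} {h : ℝ → ℝ} {a b : ℝ} (hab : a ≤ b)
    (hm : MonotoneOn h (Icc a b)) :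
    eVariationOn (fun t => c * ((h t : ℝ) : ℂ)) (Icc a b) ≤
      ENNReal.ofReal (‖c‖ * (h b - h a)) := by
  have hlip : LipschitzWith ‖c‖₊ (fun x : ℝ => c * (x : ℂ)) := by
    apply LipschitzWith.of_dist_le_mul
    intro x y
    rw [Complex.dist_eq, ← mul_sub, norm_mul, ← Complex.ofReal_sub, Complex.norm_real, Real.norm_eq_abs,
      Real.dist_eq]
    rfl
  have h0 : eVariationOn ((fun x : ℝ => c * (x : ℂ)) ∘ h) (Icc a b) ≤
      (‖c‖₊ : ENNReal) * eVariationOn h (Icc a b) :=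
    (hlip.lipschitzOnWith (s := univ)).comp_eVariationOn_le (mapsTo_univ _ _)
  have h1 : eVariationOn h (Icc a b) ≤ ENNReal.ofReal (h b - h a) := by
    have := hm.eVariationOn_le (left_mem_Icc.2 hab) (right_mem_Icc.2 hab)
    simpa using this
  calc eVariationOn (fun t => c * ((h t : ℝ) : ℂ)) (Icc a b)
      ≤ (‖c‖₊ : ENNReal) * eVariationOn h (Icc a b) := h0
    _ ≤ (‖c‖₊ : ENNReal) * ENNReal.ofReal (h b - h a) := mul_le_mul_right h1 _
    _ = ENNReal.ofReal (‖c‖ * (h b - h a)) := by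
        rw [ENNReal.ofReal_mul (norm_nonneg _), ← ENNReal.ofReal_coe_nnreal, coe_nnnorm]

lemma evar_mul_mono_or_anti {c : ℂ} {h : ℝ → ℝ} {a b : ℝ} (hab : a ≤ b)
    (hm : MonotoneOn h (Icc a b) ∨ AntitoneOn h (Icc a b)) :
    eVariationOn (fun t => c * ((h t : ℝ) : ℂ)) (Icc a b) ≤
      ENNReal.ofReal (‖c‖ * |h b - h a|) := by
  rcases hm with hm | hm
  · have hba : h a ≤ h b := hm (left_mem_Icc.2 hab) (right_mem_Icc.2 hab) hab
    rw [_root_.abs_of_nonneg (by linarith : (0:ℝ) ≤ h b - h a)]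
    exact evar_mul_mono hab hm
  · have key : (fun t => c * ((h t : ℝ) : ℂ)) = fun t => (-c) * (((-h t : ℝ)) : ℂ) := by
      funext t; push_cast; ring
    rw [key]
    have hm' : MonotoneOn (fun t => -h t) (Icc a b) := fun x hx y hy hxy => by
      simpa using hm hx hy hxy
    have h2 := evar_mul_mono (c := -c) hab hm'
    have hba : h b ≤ h a := hm (left_mem_Icc.2 hab) (right_mem_Icc.2 hab) hab
    have e : ‖-c‖ * (-h b - -h a) = ‖c‖ * |h b - h a| := by
      rw [norm_neg, _root_.abs_of_nonpos (by linarith : h b - h a ≤ 0)]; ring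
    rwa [e] at h2

lemma path_split (γ : ℝ → ℂ) :
    pathLength γ = eVariationOn γ (Icc 0 (1/2)) + eVariationOn γ (Icc (1/2) 1) := by
  have h := eVariationOn.Icc_add_Icc γ (s := Icc (0:ℝ) 1) (a := 0) (b := 1/2) (c := 1)
    (by norm_num) (by norm_num) (by norm_num)
  have e1 : Icc (0:ℝ) 1 ∩ Icc 0 (1/2) = Icc 0 (1/2) := by rw [Icc_inter_Icc]; norm_num
  have e2 : Icc (0:ℝ) 1 ∩ Icc (1/2) 1 = Icc (1/2) 1 := by rw [Icc_inter_Icc]; norm_num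
  have e3 : Icc (0:ℝ) 1 ∩ Icc 0 1 = Icc 0 1 := inter_self _
  rw [e1, e2, e3] at h
  rw [pathLength, ← h]

lemma abs_exp_sub_one (θ : ℝ) :
    ‖Complex.exp ((θ : ℂ) * Complex.I) - 1‖ = 2 * |Real.sin (θ/2)| := by
  have h1 : (Complex.exp ((θ : ℂ) * Complex.I) - 1).re = Real.cos θ - 1 := by
    rw [Complex.exp_mul_I]; simp [Complex.cos_ofReal_re]
  have h2 : (Complex.exp ((θ : ℂ) * Complex.I) - 1).im = Real.sin θ := by
    rw [Complex.exp_mul_I]; simp [Complex.sin_ofReal_re]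
  rw [Complex.norm_def, Complex.normSq_apply, h1, h2]
  have hcos : Real.cos θ = 1 - 2 * Real.sin (θ/2) ^ 2 := by
    have hc := Real.cos_sq (θ/2)
    have hs := Real.sin_sq_add_cos_sq (θ/2)
    have h2' : 2 * (θ/2) = θ := by ring
    rw [h2'] at hc
    linarith
  have hsin : Real.sin θ = 2 * Real.sin (θ/2) * Real.cos (θ/2) := by
    have := Real.sin_two_mul (θ/2)
    have h2' : 2 * (θ/2) = θ := by ring
    rwa [h2'] at this
  have key : (Real.cos θ - 1) * (Real.cos θ - 1) + Real.sin θ * Real.sin θ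
      = (2 * |Real.sin (θ/2)|) ^ 2 := by
    have hs := Real.sin_sq_add_cos_sq (θ/2)
    rw [hcos, hsin, mul_pow, _root_.sq_abs]
    nlinarith [hs]
  rw [key, Real.sqrt_sq (by positivity)]

lemma angle_le {θ : ℝ} (hθ : |θ| ≤ Real.pi) :
    |θ| ≤ Real.pi / 2 * ‖Complex.exp ((θ : ℂ) * Complex.I) - 1‖ := by
  rw [abs_exp_sub_one]
  have h1 : |Real.sin (θ/2)| = Real.sin (|θ|/2) := by
    rcases le_or_gt 0 θ with h | h
    · rw [_root_.abs_of_nonneg h, _root_.abs_of_nonneg]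
      exact Real.sin_nonneg_of_nonneg_of_le_pi (by linarith)
        (by rw [_root_.abs_of_nonneg h] at hθ; linarith [Real.pi_pos])
    · rw [_root_.abs_of_neg h]
      have : Real.sin (θ/2) = - Real.sin (-θ/2) := by
        rw [← Real.sin_neg]; congr 1; ring
      rw [this, abs_neg, _root_.abs_of_nonneg]
      exact Real.sin_nonneg_of_nonneg_of_le_pi (by linarith)
        (by rw [_root_.abs_of_neg h] at hθ; linarith [Real.pi_pos])
  rw [h1]
  have h2 : 2 / Real.pi * (|θ|/2) ≤ Real.sin (|θ|/2) :=
    Real.mul_le_sin (by positivity) (by linarith [abs_nonneg θ])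
  have hπ := Real.pi_pos
  have h3 : 2 / Real.pi * (|θ|/2) = |θ| / Real.pi := by ring
  rw [h3] at h2
  have h4 : |θ| ≤ Real.pi * Real.sin (|θ|/2) := by
    rw [div_le_iff₀ hπ] at h2
    linarith [h2]
  calc |θ| ≤ Real.pi * Real.sin (|θ|/2) := h4
    _ = Real.pi / 2 * (2 * Real.sin (|θ|/2)) := by ring

lemma piecewiseC1_one {γ : ℝ → ℂ} (h : ContDiffOn ℝ 1 γ (Icc 0 1)) : PiecewiseC1On γ := by
  refine ⟨h.continuousOn, 1, fun i => ((i : ℕ) : ℝ), by simp, by simp, ?_, ?_⟩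
  · intro i j hij
    have h' : (i : ℕ) ≤ (j : ℕ) := hij
    exact_mod_cast Nat.cast_le.mpr h'
  · intro i
    fin_cases i
    simpa using h

lemma piecewiseC1_two {γ : ℝ → ℂ} (h1 : ContDiffOn ℝ 1 γ (Icc 0 (1/2)))
    (h2 : ContDiffOn ℝ 1 γ (Icc (1/2) 1)) : PiecewiseC1On γ := by
  refine ⟨glue_contOn (by norm_num) (by norm_num) h1.continuousOn h2.continuousOn,
    2, fun i => ((i : ℕ) : ℝ)/2, by norm_num, by norm_num [Fin.last], ?_, ?_⟩
  · intro i j hij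
    have h' : (i : ℕ) ≤ (j : ℕ) := hij
    have : ((i : ℕ) : ℝ) ≤ ((j : ℕ) : ℝ) := Nat.cast_le.mpr h'
    simp only []
    linarith
  · intro i
    fin_cases i
    · convert h1 using 2 <;> norm_num
    · convert h2 using 2 <;> norm_num

open Real in
lemma aux0 (z w z' w' : ℂ)
    (hz : ‖z‖ ≤ 1) (hw : ‖w‖ ≤ 1)
    (hz' : ‖z'‖ ≤ 1) (hw' : ‖w'‖ ≤ 1)
    (h0 : z = 0) (h0' : z' = 0 ∨ w' = 0) :
    ∃ γz γw : ℝ → ℂ, PiecewiseC1On γz ∧ PiecewiseC1On γw ∧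
      γz 0 = z ∧ γz 1 = z' ∧ γw 0 = w ∧ γw 1 = w' ∧
      (∀ t ∈ Set.Icc (0 : ℝ) 1, ‖γz t‖ ≤ 1 ∧ ‖γw t‖ ≤ 1) ∧
      (∀ t ∈ Set.Icc (0 : ℝ) 1, γz t * γw t = 0) ∧
      pathLength γz + pathLength γw ≤
        ENNReal.ofReal (8 * Real.pi * max (‖z - z'‖) (‖w - w'‖)) := by
  subst h0
  have hpi := Real.pi_gt_three
  have hmaxw : ‖w - w'‖ ≤ max (‖0 - z'‖) (‖w - w'‖) :=
    le_max_right _ _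
  rcases h0' with h0' | h0'
  · -- z' = 0 : γz ≡ 0, γw linear
    subst h0'
    refine ⟨fun _ => 0, fun t => w + (t : ℂ) * (w' - w), ?_, ?_, by simp, by simp, by simp, by simp,
      ?_, ?_, ?_⟩
    · exact piecewiseC1_one contDiffOn_const
    · apply piecewiseC1_one
      apply ContDiffOn.add contDiffOn_const
      exact ((Complex.ofRealCLM.contDiff.comp contDiff_id).mul contDiff_const).contDiffOn
    · intro t ht
      refine ⟨by simp, ?_⟩
      have he : w + (t : ℂ) * (w' - w) = ((1 - t : ℝ) : ℂ) * w + ((t : ℝ) : ℂ) * w' := by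
        push_cast; ring
      show ‖w + (t : ℂ) * (w' - w)‖ ≤ 1
      rw [he]
      calc ‖((1 - t : ℝ) : ℂ) * w + ((t : ℝ) : ℂ) * w'‖
          ≤ ‖((1 - t : ℝ) : ℂ) * w‖ + ‖((t : ℝ) : ℂ) * w'‖ :=
            norm_add_le _ _
        _ = |1 - t| * ‖w‖ + |t| * ‖w'‖ := by
            rw [norm_mul, norm_mul, Complex.norm_real, Real.norm_eq_abs, Complex.norm_real, Real.norm_eq_abs]
        _ ≤ (1 - t) * 1 + t * 1 := by
            rw [_root_.abs_of_nonneg (by linarith [ht.2] : (0:ℝ) ≤ 1 - t),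
              _root_.abs_of_nonneg ht.1]
            have h1 : 0 ≤ 1 - t := by linarith [ht.2]
            nlinarith [norm_nonneg w, norm_nonneg w', ht.1]
        _ = 1 := by ring
    · intro t _; simp
    · have hz0 : pathLength (fun _ : ℝ => (0:ℂ)) = 0 := by
        apply eVariationOn.constant_on
        rintro x ⟨_, _, rfl⟩ y ⟨_, _, rfl⟩; rfl
      have hwlen : pathLength (fun t : ℝ => w + (t : ℂ) * (w' - w)) ≤
          ENNReal.ofReal (‖w' - w‖ * (1 - 0)) := by
        apply evar_le_deriv (f' := fun _ => w' - w) (by norm_num)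
          (by positivity)
        · intro x _
          have h1 : HasDerivAt (fun t : ℝ => w + (t : ℂ) * (w' - w)) (w' - w) x := by
            simpa using (((hasDerivAt_id x).ofReal_comp).mul_const (w' - w)).const_add w
          exact h1.hasDerivWithinAt
        · intro x _
          simp
      rw [hz0, zero_add]
      apply le_trans hwlen
      apply ENNReal.ofReal_le_ofReal
      have h1 : ‖w' - w‖ = ‖w - w'‖ := by
        rw [← norm_sub_rev]
      rw [h1]
      nlinarith [le_max_right (‖(0:ℂ) - 0‖) (‖w - w'‖),
        norm_nonneg (w - w'), le_max_left (‖(0:ℂ) - 0‖) (‖w - w'‖),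
        norm_nonneg ((0:ℂ) - 0)]
  · -- w' = 0 : two-phase
    subst h0'
    set γz : ℝ → ℂ := fun t => if t ≤ 1/2 then 0 else z' * ((2*t - 1 : ℝ) : ℂ) with hγz
    set γw : ℝ → ℂ := fun t => if t ≤ 1/2 then w * ((1 - 2*t : ℝ) : ℂ) else 0 with hγw
    have heqz1 : Set.EqOn γz (fun _ => (0:ℂ)) (Set.Icc 0 (1/2)) := fun t ht => if_pos ht.2
    have heqz2 : Set.EqOn γz (fun t => z' * ((2*t - 1 : ℝ) : ℂ)) (Set.Icc (1/2) 1) := by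
      intro t ht
      simp only [hγz]
      by_cases h : t ≤ 1/2
      · have ht2 : t = 1/2 := le_antisymm h ht.1
        rw [if_pos h, ht2]
        norm_num
      · rw [if_neg h]
    have heqw1 : Set.EqOn γw (fun t => w * ((1 - 2*t : ℝ) : ℂ)) (Set.Icc 0 (1/2)) :=
      fun t ht => if_pos ht.2
    have heqw2 : Set.EqOn γw (fun _ => (0:ℂ)) (Set.Icc (1/2) 1) := by
      intro t ht
      simp only [hγw]
      by_cases h : t ≤ 1/2
      · have ht2 : t = 1/2 := le_antisymm h ht.1
        rw [if_pos h, ht2]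
        norm_num
      · rw [if_neg h]
    have hcz2 : ContDiff ℝ 1 (fun t : ℝ => z' * ((2*t - 1 : ℝ) : ℂ)) := by
      apply ContDiff.mul contDiff_const
      exact Complex.ofRealCLM.contDiff.comp ((contDiff_const.mul contDiff_id).sub contDiff_const)
    have hcw1 : ContDiff ℝ 1 (fun t : ℝ => w * ((1 - 2*t : ℝ) : ℂ)) := by
      apply ContDiff.mul contDiff_const
      exact Complex.ofRealCLM.contDiff.comp (contDiff_const.sub (contDiff_const.mul contDiff_id))
    refine ⟨γz, γw, ?_, ?_, ?_, ?_, ?_, ?_, ?_, ?_, ?_⟩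
    · exact piecewiseC1_two (contDiffOn_const.congr heqz1) (hcz2.contDiffOn.congr heqz2)
    · exact piecewiseC1_two (hcw1.contDiffOn.congr heqw1) (contDiffOn_const.congr heqw2)
    · simp [hγz]
    · rw [hγz]; norm_num
    · rw [hγw]; norm_num
    · rw [hγw]; norm_num
    · intro t ht
      constructor
      · by_cases h : t ≤ 1/2
        · rw [heqz1 ⟨ht.1, h⟩]
          simp
        · simp only [hγz]
          rw [if_neg h]
          rw [norm_mul, Complex.norm_real, Real.norm_eq_abs]
          have : |2*t - 1| ≤ 1 := by rw [abs_le]; constructor <;> linarith [ht.1, ht.2]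
          calc ‖z'‖ * |2*t - 1| ≤ 1 * 1 := by
                apply mul_le_mul hz' this (abs_nonneg _) zero_le_one
            _ = 1 := one_mul 1
      · by_cases h : t ≤ 1/2
        · simp only [hγw]
          rw [if_pos h, norm_mul, Complex.norm_real, Real.norm_eq_abs]
          have : |1 - 2*t| ≤ 1 := by rw [abs_le]; constructor <;> linarith [ht.1, ht.2]
          calc ‖w‖ * |1 - 2*t| ≤ 1 * 1 := by
                apply mul_le_mul hw this (abs_nonneg _) zero_le_one
            _ = 1 := one_mul 1
        · simp only [hγw]
          rw [if_neg h]
          simp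
    · intro t _
      by_cases h : t ≤ 1/2
      · simp only [hγz, hγw]
        rw [if_pos h, zero_mul]
      · simp only [hγz, hγw]
        rw [if_neg h, if_neg h, mul_zero]
    · rw [path_split γz, path_split γw]
      have hz1 : eVariationOn γz (Set.Icc 0 (1/2)) = 0 := by
        rw [eVariationOn.eq_of_eqOn heqz1]
        apply eVariationOn.constant_on
        rintro x ⟨_, _, rfl⟩ y ⟨_, _, rfl⟩; rfl
      have hw2 : eVariationOn γw (Set.Icc (1/2) 1) = 0 := by
        rw [eVariationOn.eq_of_eqOn heqw2]
        apply eVariationOn.constant_on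
        rintro x ⟨_, _, rfl⟩ y ⟨_, _, rfl⟩; rfl
      have hz2 : eVariationOn γz (Set.Icc (1/2) 1) ≤
          ENNReal.ofReal (‖z'‖ * 1) := by
        rw [eVariationOn.eq_of_eqOn heqz2]
        have := evar_mul_mono (c := z') (h := fun t => 2*t - 1) (a := (1:ℝ)/2) (b := 1)
          (by norm_num) (fun x _ y _ hxy => by simp only; linarith)
        convert this using 2
        norm_num
      have hw1 : eVariationOn γw (Set.Icc 0 (1/2)) ≤
          ENNReal.ofReal (‖w‖ * 1) := by
        rw [eVariationOn.eq_of_eqOn heqw1]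
        have := evar_mul_mono_or_anti (c := w) (h := fun t => 1 - 2*t) (a := (0:ℝ)) (b := 1/2)
          (by norm_num) (Or.inr (fun x _ y _ hxy => by simp only; linarith))
        convert this using 2
        norm_num
      rw [hz1, hw2, zero_add, add_zero]
      calc eVariationOn γz (Set.Icc (1/2) 1) + eVariationOn γw (Set.Icc 0 (1/2))
          ≤ ENNReal.ofReal (‖z'‖ * 1) + ENNReal.ofReal (‖w‖ * 1) :=
            add_le_add hz2 hw1
        _ = ENNReal.ofReal (‖z'‖ * 1 + ‖w‖ * 1) :=
            (ENNReal.ofReal_add (by positivity) (by positivity)).symm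
        _ ≤ ENNReal.ofReal (8 * Real.pi * max (‖0 - z'‖) (‖w - 0‖)) := by
            apply ENNReal.ofReal_le_ofReal
            have e1 : ‖0 - z'‖ = ‖z'‖ := by simp
            have e2 : ‖w - 0‖ = ‖w‖ := by simp
            rw [e1, e2]
            nlinarith [le_max_left (‖z'‖) (‖w‖),
              le_max_right (‖z'‖) (‖w‖),
              norm_nonneg z', norm_nonneg w]

set_option maxHeartbeats 2000000 in
lemma main_pos (δ : ℝ) (hδ : 0 < δ) (z w z' w' : ℂ)
    (hz : ‖z‖ ≤ 1) (hw : ‖w‖ ≤ 1)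
    (hz' : ‖z'‖ ≤ 1) (hw' : ‖w'‖ ≤ 1)
    (hzw : z * w = (δ : ℂ) ^ 2) (hzw' : z' * w' = (δ : ℂ) ^ 2) :
    ∃ γz γw : ℝ → ℂ, PiecewiseC1On γz ∧ PiecewiseC1On γw ∧
      γz 0 = z ∧ γz 1 = z' ∧ γw 0 = w ∧ γw 1 = w' ∧
      (∀ t ∈ Set.Icc (0 : ℝ) 1, ‖γz t‖ ≤ 1 ∧ ‖γw t‖ ≤ 1) ∧
      (∀ t ∈ Set.Icc (0 : ℝ) 1, γz t * γw t = (δ : ℂ) ^ 2) ∧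
      pathLength γz + pathLength γw ≤
        ENNReal.ofReal (8 * Real.pi * max (‖z - z'‖) (‖w - w'‖)) := by
  have hδ2 : ((δ : ℂ)) ^ 2 ≠ 0 := pow_ne_zero _ (Complex.ofReal_ne_zero.mpr hδ.ne')
  have hz0 : z ≠ 0 := fun h => hδ2 (by rw [← hzw, h, zero_mul])
  have hw0 : w ≠ 0 := fun h => hδ2 (by rw [← hzw, h, mul_zero])
  have hz'0 : z' ≠ 0 := fun h => hδ2 (by rw [← hzw', h, zero_mul])
  have hw'0 : w' ≠ 0 := fun h => hδ2 (by rw [← hzw', h, mul_zero])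
  have hprod : z * w = z' * w' := hzw.trans hzw'.symm
  set rz := ‖z‖ with hrz
  set rw' : ℝ := ‖w‖ with hrw
  set rz2 := ‖z'‖ with hrz2
  set rw2 : ℝ := ‖w'‖ with hrw2
  have hrzpos : 0 < rz := norm_pos_iff.mpr hz0
  have hrwpos : 0 < rw' := norm_pos_iff.mpr hw0
  have hrz2pos : 0 < rz2 := norm_pos_iff.mpr hz'0
  have hrw2pos : 0 < rw2 := norm_pos_iff.mpr hw'0
  have habs : rz * rw' = δ ^ 2 := by
    have h := congrArg (‖·‖) hzw
    rwa [norm_mul, norm_pow, Complex.norm_real, Real.norm_eq_abs, _root_.abs_of_nonneg hδ.le] at h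
  have habs' : rz2 * rw2 = δ ^ 2 := by
    have h := congrArg (‖·‖) hzw'
    rwa [norm_mul, norm_pow, Complex.norm_real, Real.norm_eq_abs, _root_.abs_of_nonneg hδ.le] at h
  have hcz : ((rz : ℂ)) ≠ 0 := Complex.ofReal_ne_zero.mpr hrzpos.ne'
  have hcz2 : ((rz2 : ℂ)) ≠ 0 := Complex.ofReal_ne_zero.mpr hrz2pos.ne'
  set u : ℂ := (z' * (rz : ℂ)) / (z * (rz2 : ℂ)) with hu
  have hu1 : ‖u‖ = 1 := by
    rw [hu, norm_div, norm_mul, norm_mul, Complex.norm_real, Real.norm_eq_abs, Complex.norm_real, Real.norm_eq_abs,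
      _root_.abs_of_nonneg hrzpos.le, _root_.abs_of_nonneg hrz2pos.le]
    rw [← hrz, ← hrz2]
    field_simp
  have hu0 : u ≠ 0 := by
    intro h
    rw [h] at hu1
    simp at hu1
  set α := u.arg with hα
  have hαpi : |α| ≤ Real.pi := Complex.abs_arg_le_pi u
  have hue : Complex.exp ((α : ℂ) * Complex.I) = u := by
    have h := Complex.norm_mul_exp_arg_mul_I u
    rwa [hu1, Complex.ofReal_one, one_mul] at h
  set l := rz2 / rz with hl
  have hlpos : 0 < l := div_pos hrz2pos hrzpos
  set f : ℝ → ℝ := fun t => 1 + (2*t - 1) * (l - 1) with hf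
  have hfhalf : f (1/2) = 1 := by show (1:ℝ) + (2*(1/2) - 1) * (l - 1) = 1; norm_num
  have hfone : f 1 = l := by show (1:ℝ) + (2*1 - 1) * (l - 1) = l; ring
  have hfpos : ∀ t ∈ Set.Icc (1/2 : ℝ) 1, 0 < f t := by
    intro t ht
    show (0:ℝ) < 1 + (2*t - 1) * (l - 1)
    rcases le_total l 1 with hc | hc
    · nlinarith [mul_nonneg (by linarith [ht.2] : (0:ℝ) ≤ 2 - 2*t)
        (by linarith : (0:ℝ) ≤ 1 - l), hlpos]
    · nlinarith [mul_nonneg (by linarith [ht.1] : (0:ℝ) ≤ 2*t - 1)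
        (by linarith : (0:ℝ) ≤ l - 1)]
  set rotZ : ℝ → ℂ := fun t => z * Complex.exp (((2*α*t : ℝ) : ℂ) * Complex.I) with hrotZ
  set rotW : ℝ → ℂ := fun t => w * Complex.exp (((-(2*α*t) : ℝ) : ℂ) * Complex.I) with hrotW
  set sclZ : ℝ → ℂ := fun t => (z * u) * ((f t : ℝ) : ℂ) with hsclZ
  set sclW : ℝ → ℂ := fun t => (w / u) * (((f t)⁻¹ : ℝ) : ℂ) with hsclW
  set γz : ℝ → ℂ := fun t => if t ≤ 1/2 then rotZ t else sclZ t with hγz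
  set γw : ℝ → ℂ := fun t => if t ≤ 1/2 then rotW t else sclW t with hγw
  have hrotZhalf : rotZ (1/2) = z * u := by
    rw [hrotZ]
    simp only
    have h1 : (2*α*(1/2) : ℝ) = α := by ring
    rw [h1, hue]
  have hrotWhalf : rotW (1/2) = w / u := by
    rw [hrotW]
    simp only
    have h1 : (-(2*α*(1/2)) : ℝ) = -α := by ring
    rw [h1]
    have h2 : ((-α : ℝ) : ℂ) * Complex.I = -((α : ℂ) * Complex.I) := by push_cast; ring
    rw [h2, Complex.exp_neg, hue, div_eq_mul_inv]
  have heqz1 : Set.EqOn γz rotZ (Set.Icc 0 (1/2)) := fun t ht => if_pos ht.2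
  have heqw1 : Set.EqOn γw rotW (Set.Icc 0 (1/2)) := fun t ht => if_pos ht.2
  have heqz2 : Set.EqOn γz sclZ (Set.Icc (1/2) 1) := by
    intro t ht
    simp only [hγz]
    by_cases h : t ≤ 1/2
    · have ht2 : t = 1/2 := le_antisymm h ht.1
      rw [if_pos h, ht2, hrotZhalf, hsclZ]
      simp only
      rw [hfhalf]
      norm_num
    · rw [if_neg h]
  have heqw2 : Set.EqOn γw sclW (Set.Icc (1/2) 1) := by
    intro t ht
    simp only [hγw]
    by_cases h : t ≤ 1/2
    · have ht2 : t = 1/2 := le_antisymm h ht.1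
      rw [if_pos h, ht2, hrotWhalf, hsclW]
      simp only
      rw [hfhalf]
      norm_num
    · rw [if_neg h]
  -- smoothness
  have hfc : ContDiff ℝ 1 f := by
    rw [hf]
    exact contDiff_const.add (((contDiff_const.mul contDiff_id).sub contDiff_const).mul
      contDiff_const)
  have hrotZc : ContDiff ℝ 1 rotZ := by
    rw [hrotZ]
    apply contDiff_const.mul
    exact ((Complex.ofRealCLM.contDiff.comp (contDiff_const.mul contDiff_id)).mul
      contDiff_const).cexp
  have hrotWc : ContDiff ℝ 1 rotW := by
    rw [hrotW]
    apply contDiff_const.mul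
    exact ((Complex.ofRealCLM.contDiff.comp ((contDiff_const.mul contDiff_id).neg)).mul
      contDiff_const).cexp
  have hsclZc : ContDiff ℝ 1 sclZ := by
    rw [hsclZ]
    exact contDiff_const.mul (Complex.ofRealCLM.contDiff.comp hfc)
  have hsclWc : ContDiffOn ℝ 1 sclW (Set.Icc (1/2) 1) := by
    rw [hsclW]
    apply ContDiffOn.mul contDiffOn_const
    exact Complex.ofRealCLM.contDiff.comp_contDiffOn
      (hfc.contDiffOn.inv (fun x hx => (hfpos x hx).ne'))
  -- algebraic identities
  have hrzl : rz * l = rz2 := by rw [hl]; field_simp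
  have hrwl : rw' * l⁻¹ = rw2 := by
    rw [hl]
    rw [inv_div]
    rw [mul_div_assoc']
    rw [div_eq_iff hrz2pos.ne']
    nlinarith [habs, habs']
  have hzu : z * u = z' * ((rz / rz2 : ℝ) : ℂ) := by
    rw [hu]
    push_cast
    field_simp
  have hwu : w / u = w' * ((rz2 / rz : ℝ) : ℂ) := by
    rw [hu]
    push_cast
    field_simp
    linear_combination hprod
  -- endpoints
  have hγz0 : γz 0 = z := by
    show (if (0:ℝ) ≤ 1/2 then rotZ 0 else sclZ 0) = z
    rw [if_pos (by norm_num)]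
    show z * Complex.exp (((2*α*0 : ℝ) : ℂ) * Complex.I) = z
    norm_num
  have hγw0 : γw 0 = w := by
    show (if (0:ℝ) ≤ 1/2 then rotW 0 else sclW 0) = w
    rw [if_pos (by norm_num)]
    show w * Complex.exp (((-(2*α*0) : ℝ) : ℂ) * Complex.I) = w
    norm_num
  have hγz1 : γz 1 = z' := by
    show (if (1:ℝ) ≤ 1/2 then rotZ 1 else sclZ 1) = z'
    rw [if_neg (by norm_num)]
    show (z * u) * ((f 1 : ℝ) : ℂ) = z'
    rw [hfone, hzu]
    rw [mul_assoc, ← Complex.ofReal_mul]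
    have : rz / rz2 * l = 1 := by rw [hl]; field_simp
    rw [this]
    simp
  have hγw1 : γw 1 = w' := by
    show (if (1:ℝ) ≤ 1/2 then rotW 1 else sclW 1) = w'
    rw [if_neg (by norm_num)]
    show (w / u) * (((f 1)⁻¹ : ℝ) : ℂ) = w'
    rw [hfone, hwu]
    rw [mul_assoc, ← Complex.ofReal_mul]
    have : rz2 / rz * l⁻¹ = 1 := by rw [hl]; field_simp
    rw [this]
    simp
  -- moduli
  have hmod : ∀ t ∈ Set.Icc (0:ℝ) 1, ‖γz t‖ ≤ 1 ∧ ‖γw t‖ ≤ 1 := by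
    intro t ht
    by_cases h : t ≤ 1/2
    · constructor
      · rw [heqz1 ⟨ht.1, h⟩]
        show ‖z * Complex.exp (((2*α*t : ℝ) : ℂ) * Complex.I)‖ ≤ 1
        rw [norm_mul, Complex.norm_exp_ofReal_mul_I, mul_one]
        exact hz
      · rw [heqw1 ⟨ht.1, h⟩]
        show ‖w * Complex.exp (((-(2*α*t) : ℝ) : ℂ) * Complex.I)‖ ≤ 1
        rw [norm_mul, Complex.norm_exp_ofReal_mul_I, mul_one]
        exact hw
    · push_neg at h
      have ht2 : t ∈ Set.Icc (1/2:ℝ) 1 := ⟨h.le, ht.2⟩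
      have hft := hfpos t ht2
      constructor
      · rw [heqz2 ht2]
        show ‖(z * u) * ((f t : ℝ) : ℂ)‖ ≤ 1
        rw [norm_mul, norm_mul, hu1, Complex.norm_real, Real.norm_eq_abs, mul_one,
          _root_.abs_of_pos hft]
        rcases le_total l 1 with hc | hc
        · have : f t ≤ 1 := by
            show (1:ℝ) + (2*t - 1) * (l - 1) ≤ 1
            nlinarith [mul_nonneg (by linarith [ht2.1] : (0:ℝ) ≤ 2*t - 1)
              (by linarith : (0:ℝ) ≤ 1 - l)]
          calc rz * f t ≤ 1 * 1 := mul_le_mul hz this hft.le zero_le_one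
            _ = 1 := one_mul 1
        · have : f t ≤ l := by
            show (1:ℝ) + (2*t - 1) * (l - 1) ≤ l
            nlinarith [mul_nonneg (by linarith [ht2.2] : (0:ℝ) ≤ 2 - 2*t)
              (by linarith : (0:ℝ) ≤ l - 1)]
          calc rz * f t ≤ rz * l := by nlinarith [hrzpos]
            _ = rz2 := hrzl
            _ ≤ 1 := hz'
      · rw [heqw2 ht2]
        show ‖(w / u) * (((f t)⁻¹ : ℝ) : ℂ)‖ ≤ 1
        rw [norm_mul, norm_div, hu1, div_one, Complex.norm_real, Real.norm_eq_abs,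
          _root_.abs_of_pos (inv_pos.mpr hft)]
        rcases le_total l 1 with hc | hc
        · have hfl : l ≤ f t := by
            show l ≤ (1:ℝ) + (2*t - 1) * (l - 1)
            nlinarith [mul_nonneg (by linarith [ht2.2] : (0:ℝ) ≤ 2 - 2*t)
              (by linarith : (0:ℝ) ≤ 1 - l)]
          have h1 : (f t)⁻¹ ≤ l⁻¹ := inv_anti₀ hlpos hfl
          calc rw' * (f t)⁻¹ ≤ rw' * l⁻¹ := by nlinarith [hrwpos]
            _ = rw2 := hrwl
            _ ≤ 1 := hw'
        · have hfl : 1 ≤ f t := by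
            show (1:ℝ) ≤ 1 + (2*t - 1) * (l - 1)
            nlinarith [mul_nonneg (by linarith [ht2.1] : (0:ℝ) ≤ 2*t - 1)
              (by linarith : (0:ℝ) ≤ l - 1)]
          have h1 : (f t)⁻¹ ≤ 1 := by
            rw [← inv_one]
            exact inv_anti₀ one_pos hfl
          calc rw' * (f t)⁻¹ ≤ 1 * 1 := mul_le_mul hw h1 (by positivity) zero_le_one
            _ = 1 := one_mul 1
  -- product
  have hprd : ∀ t ∈ Set.Icc (0:ℝ) 1, γz t * γw t = (δ : ℂ) ^ 2 := by
    intro t ht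
    by_cases h : t ≤ 1/2
    · rw [heqz1 ⟨ht.1, h⟩, heqw1 ⟨ht.1, h⟩]
      show (z * Complex.exp (((2*α*t : ℝ) : ℂ) * Complex.I)) *
        (w * Complex.exp (((-(2*α*t) : ℝ) : ℂ) * Complex.I)) = (δ : ℂ) ^ 2
      rw [mul_mul_mul_comm, ← Complex.exp_add]
      have he : ((2*α*t : ℝ) : ℂ) * Complex.I + ((-(2*α*t) : ℝ) : ℂ) * Complex.I = 0 := by
        push_cast; ring
      rw [he, Complex.exp_zero, mul_one, hzw]
    · push_neg at h
      have ht2 : t ∈ Set.Icc (1/2:ℝ) 1 := ⟨h.le, ht.2⟩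
      have hft := hfpos t ht2
      rw [heqz2 ht2, heqw2 ht2]
      show ((z * u) * ((f t : ℝ) : ℂ)) * ((w / u) * (((f t)⁻¹ : ℝ) : ℂ)) = (δ : ℂ) ^ 2
      have hfne : ((f t : ℝ) : ℂ) ≠ 0 := Complex.ofReal_ne_zero.mpr hft.ne'
      rw [Complex.ofReal_inv]
      have he2 : (z * u * ((f t : ℝ) : ℂ)) * (w / u * (((f t : ℝ) : ℂ))⁻¹) =
          (z * w) * ((u / u) * (((f t : ℝ) : ℂ) * (((f t : ℝ) : ℂ))⁻¹)) := by ring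
      rw [he2, div_self hu0, mul_inv_cancel₀ hfne, one_mul, mul_one, hzw]
  -- length bounds
  have hVZ1 : eVariationOn γz (Set.Icc 0 (1/2)) ≤ ENNReal.ofReal (rz * |α|) := by
    rw [eVariationOn.eq_of_eqOn heqz1]
    have hder : ∀ x ∈ Set.Icc (0:ℝ) (1/2), HasDerivWithinAt rotZ
        (z * (Complex.exp (((2*α*x : ℝ) : ℂ) * Complex.I) * (((2*α : ℝ) : ℂ) * Complex.I)))
        (Set.Icc (0:ℝ) (1/2)) x := by
      intro x _
      have h1 : HasDerivAt (fun s : ℝ => 2*α*s) (2*α) x := by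
        simpa using (hasDerivAt_id x).const_mul (2*α)
      exact (((h1.ofReal_comp).mul_const Complex.I).cexp.const_mul z).hasDerivWithinAt
    have hbnd : ∀ x ∈ Set.Icc (0:ℝ) (1/2),
        ‖z * (Complex.exp (((2*α*x : ℝ) : ℂ) * Complex.I) * (((2*α : ℝ) : ℂ) * Complex.I))‖ ≤
          rz * |2*α| := by
      intro x _
      rw [norm_mul, norm_mul, norm_mul, Complex.norm_exp_ofReal_mul_I,
        Complex.norm_real, Real.norm_eq_abs, Complex.norm_I]
      rw [← hrz]
      nlinarith [norm_nonneg z, abs_nonneg (2*α)]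
    have h := evar_le_deriv (by norm_num : (0:ℝ) ≤ 1/2) (by positivity : (0:ℝ) ≤ rz * |2*α|)
      hder hbnd
    apply le_trans h
    apply le_of_eq
    congr 1
    rw [abs_mul, _root_.abs_two]
    ring
  have hVW1 : eVariationOn γw (Set.Icc 0 (1/2)) ≤ ENNReal.ofReal (rw' * |α|) := by
    rw [eVariationOn.eq_of_eqOn heqw1]
    have hder : ∀ x ∈ Set.Icc (0:ℝ) (1/2), HasDerivWithinAt rotW
        (w * (Complex.exp (((-(2*α*x) : ℝ) : ℂ) * Complex.I) * (((-(2*α) : ℝ) : ℂ) * Complex.I)))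
        (Set.Icc (0:ℝ) (1/2)) x := by
      intro x _
      have h1 : HasDerivAt (fun s : ℝ => -(2*α*s)) (-(2*α)) x := by
        exact (((hasDerivAt_id x).const_mul (2*α)).neg).congr_deriv (by simp)
      exact (((h1.ofReal_comp).mul_const Complex.I).cexp.const_mul w).hasDerivWithinAt
    have hbnd : ∀ x ∈ Set.Icc (0:ℝ) (1/2),
        ‖w * (Complex.exp (((-(2*α*x) : ℝ) : ℂ) * Complex.I) * (((-(2*α) : ℝ) : ℂ) * Complex.I))‖ ≤
          rw' * |2*α| := by
      intro x _
      rw [norm_mul, norm_mul, norm_mul, Complex.norm_exp_ofReal_mul_I,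
        Complex.norm_real, Real.norm_eq_abs, Complex.norm_I, abs_neg]
      rw [← hrw]
      nlinarith [norm_nonneg w, abs_nonneg (2*α)]
    have h := evar_le_deriv (by norm_num : (0:ℝ) ≤ 1/2) (by positivity : (0:ℝ) ≤ rw' * |2*α|)
      hder hbnd
    apply le_trans h
    apply le_of_eq
    congr 1
    rw [abs_mul, _root_.abs_two]
    ring
  have hmono : MonotoneOn f (Set.Icc (1/2:ℝ) 1) ∨ AntitoneOn f (Set.Icc (1/2:ℝ) 1) := by
    rcases le_total 1 l with hc | hc
    · left; intro x _ y _ hxy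
      show (1:ℝ) + (2*x - 1) * (l - 1) ≤ 1 + (2*y - 1) * (l - 1)
      nlinarith
    · right; intro x _ y _ hxy
      show (1:ℝ) + (2*y - 1) * (l - 1) ≤ 1 + (2*x - 1) * (l - 1)
      nlinarith
  have hVZ2 : eVariationOn γz (Set.Icc (1/2) 1) ≤ ENNReal.ofReal (rz * |l - 1|) := by
    rw [eVariationOn.eq_of_eqOn heqz2]
    have h := evar_mul_mono_or_anti (c := z * u) (h := f) (a := (1:ℝ)/2) (b := 1)
      (by norm_num) hmono
    apply le_trans h
    apply le_of_eq
    congr 1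
    rw [hfone, hfhalf, norm_mul, hu1, mul_one, ← hrz]
  have hmono' : MonotoneOn (fun t => (f t)⁻¹) (Set.Icc (1/2:ℝ) 1) ∨
      AntitoneOn (fun t => (f t)⁻¹) (Set.Icc (1/2:ℝ) 1) := by
    rcases le_total 1 l with hc | hc
    · right; intro x hx y hy hxy
      show (f y)⁻¹ ≤ (f x)⁻¹
      apply inv_anti₀ (hfpos x hx)
      show (1:ℝ) + (2*x - 1) * (l - 1) ≤ 1 + (2*y - 1) * (l - 1)
      nlinarith
    · left; intro x hx y hy hxy
      show (f x)⁻¹ ≤ (f y)⁻¹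
      apply inv_anti₀ (hfpos y hy)
      show (1:ℝ) + (2*y - 1) * (l - 1) ≤ 1 + (2*x - 1) * (l - 1)
      nlinarith
  have hVW2 : eVariationOn γw (Set.Icc (1/2) 1) ≤ ENNReal.ofReal (rw' * |l⁻¹ - 1|) := by
    rw [eVariationOn.eq_of_eqOn heqw2]
    have h := evar_mul_mono_or_anti (c := w / u) (h := fun t => (f t)⁻¹) (a := (1:ℝ)/2) (b := 1)
      (by norm_num) hmono'
    apply le_trans h
    apply le_of_eq
    have e1 : ‖w / u‖ = rw' := by rw [norm_div, hu1, div_one, ← hrw]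
    have e2 : |(fun t => (f t)⁻¹) 1 - (fun t => (f t)⁻¹) (1/2 : ℝ)| = |l⁻¹ - 1| := by
      simp only [hfone, hfhalf, inv_one]
    rw [e1, e2]
  -- combine
  refine ⟨γz, γw, piecewiseC1_two (hrotZc.contDiffOn.congr heqz1) (hsclZc.contDiffOn.congr heqz2),
    piecewiseC1_two (hrotWc.contDiffOn.congr heqw1) (hsclWc.congr heqw2),
    hγz0, hγz1, hγw0, hγw1, hmod, hprd, ?_⟩
  rw [path_split γz, path_split γw]
  have hsum : eVariationOn γz (Set.Icc 0 (1/2)) + eVariationOn γz (Set.Icc (1/2) 1) +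
      (eVariationOn γw (Set.Icc 0 (1/2)) + eVariationOn γw (Set.Icc (1/2) 1)) ≤
      ENNReal.ofReal (rz * |α| + rz * |l - 1| + (rw' * |α| + rw' * |l⁻¹ - 1|)) := by
    rw [ENNReal.ofReal_add (by positivity) (by positivity),
      ENNReal.ofReal_add (by positivity) (by positivity),
      ENNReal.ofReal_add (by positivity) (by positivity)]
    exact add_le_add (add_le_add hVZ1 hVZ2) (add_le_add hVW1 hVW2)
  apply le_trans hsum
  apply ENNReal.ofReal_le_ofReal
  -- real arithmetic finale
  set a := ‖z - z'‖ with ha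
  set b := ‖w - w'‖ with hb
  have ha0 : 0 ≤ a := norm_nonneg _
  have hb0 : 0 ≤ b := norm_nonneg _
  have habs_smul : ∀ (r s : ℝ), 0 < r → r * |s| = |r * s| := fun r s hr => by
    rw [abs_mul, _root_.abs_of_pos hr]
  have k1 : rz * |l - 1| = |rz2 - rz| := by
    rw [habs_smul _ _ hrzpos]
    congr 1
    rw [mul_sub, hrzl]; ring
  have k2 : rw' * |l⁻¹ - 1| = |rw2 - rw'| := by
    rw [habs_smul _ _ hrwpos]
    congr 1
    rw [mul_sub, hrwl]; ring
  have k3 : |rz2 - rz| ≤ a := by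
    have h := abs_norm_sub_norm_le z' z
    rwa [← norm_sub_rev z z', ← ha, ← hrz, ← hrz2] at h
  have k4 : |rw2 - rw'| ≤ b := by
    have h := abs_norm_sub_norm_le w' w
    rwa [← norm_sub_rev w w', ← hb, ← hrw, ← hrw2] at h
  have hang : |α| ≤ Real.pi / 2 * ‖u - 1‖ := by
    have h := angle_le hαpi
    rwa [hue] at h
  have habsz : rz * ‖u - 1‖ = ‖z * u - z‖ := by
    rw [hrz, ← norm_mul]
    congr 1
    ring
  have habsw : rw' * ‖u - 1‖ = ‖w / u - w‖ := by
    have hinv : ‖u⁻¹ - 1‖ = ‖u - 1‖ := by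
      have : u⁻¹ - 1 = u⁻¹ * (1 - u) := by field_simp
      rw [this, norm_mul, norm_inv, hu1, inv_one, one_mul, norm_sub_rev]
    rw [hrw, ← hinv, ← norm_mul]
    congr 1
    rw [mul_sub, mul_one, div_eq_mul_inv]
  have hbz : ‖z * u - z'‖ = |rz - rz2| := by
    rw [hzu]
    have he : z' * ((rz / rz2 : ℝ) : ℂ) - z' = z' * (((rz / rz2 - 1 : ℝ)) : ℂ) := by
      push_cast; ring
    rw [he, norm_mul, Complex.norm_real, Real.norm_eq_abs, ← hrz2, habs_smul _ _ hrz2pos]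
    congr 1
    field_simp
  have hbw : ‖w / u - w'‖ = |rw' - rw2| := by
    rw [hwu]
    have he : w' * ((rz2 / rz : ℝ) : ℂ) - w' = w' * (((rz2 / rz - 1 : ℝ)) : ℂ) := by
      push_cast; ring
    rw [he, norm_mul, Complex.norm_real, Real.norm_eq_abs, ← hrw2, habs_smul _ _ hrw2pos]
    congr 1
    have h5 : rw2 * rz2 = rw' * rz := by linear_combination habs' - habs
    rw [mul_sub, mul_one, mul_div_assoc', h5, mul_div_assoc, div_self hrzpos.ne', mul_one]
  have k5 : rz * |α| ≤ Real.pi / 2 * (|rz - rz2| + a) := by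
    have h1 : rz * |α| ≤ rz * (Real.pi / 2 * ‖u - 1‖) :=
      mul_le_mul_of_nonneg_left hang hrzpos.le
    have h2 : ‖z * u - z‖ ≤ ‖z * u - z'‖ + ‖z' - z‖ := by
      have := norm_add_le (z * u - z') (z' - z)
      have he : (z * u - z') + (z' - z) = z * u - z := by ring
      rwa [he] at this
    have h3 : ‖z' - z‖ = a := by rw [ha, norm_sub_rev]
    calc rz * |α| ≤ rz * (Real.pi / 2 * ‖u - 1‖) := h1
      _ = Real.pi / 2 * (rz * ‖u - 1‖) := by ring
      _ = Real.pi / 2 * ‖z * u - z‖ := by rw [habsz]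
      _ ≤ Real.pi / 2 * (|rz - rz2| + a) := by
          apply mul_le_mul_of_nonneg_left _ (by positivity)
          rw [← hbz, ← h3]
          exact h2
  have k6 : rw' * |α| ≤ Real.pi / 2 * (|rw' - rw2| + b) := by
    have h1 : rw' * |α| ≤ rw' * (Real.pi / 2 * ‖u - 1‖) :=
      mul_le_mul_of_nonneg_left hang hrwpos.le
    have h2 : ‖w / u - w‖ ≤ ‖w / u - w'‖ + ‖w' - w‖ := by
      have := norm_add_le (w / u - w') (w' - w)
      have he : (w / u - w') + (w' - w) = w / u - w := by ring
      rwa [he] at this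
    have h3 : ‖w' - w‖ = b := by rw [hb, norm_sub_rev]
    calc rw' * |α| ≤ rw' * (Real.pi / 2 * ‖u - 1‖) := h1
      _ = Real.pi / 2 * (rw' * ‖u - 1‖) := by ring
      _ = Real.pi / 2 * ‖w / u - w‖ := by rw [habsw]
      _ ≤ Real.pi / 2 * (|rw' - rw2| + b) := by
          apply mul_le_mul_of_nonneg_left _ (by positivity)
          rw [← hbw, ← h3]
          exact h2
  have hmax1 : a ≤ max a b := le_max_left a b
  have hmax2 : b ≤ max a b := le_max_right a b
  have hsym1 : |rz - rz2| = |rz2 - rz| := abs_sub_comm _ _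
  have hsym2 : |rw' - rw2| = |rw2 - rw'| := abs_sub_comm _ _
  have hpi := Real.pi_gt_three
  have hpipos := Real.pi_pos
  rw [k1, k2]
  have k5' : rz * |α| ≤ Real.pi * a := by
    have hs : |rz - rz2| + a ≤ 2 * a := by rw [hsym1]; linarith [k3]
    have := mul_le_mul_of_nonneg_left hs (by positivity : (0:ℝ) ≤ Real.pi / 2)
    calc rz * |α| ≤ Real.pi / 2 * (|rz - rz2| + a) := k5
      _ ≤ Real.pi / 2 * (2 * a) := this
      _ = Real.pi * a := by ring
  have k6' : rw' * |α| ≤ Real.pi * b := by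
    have hs : |rw' - rw2| + b ≤ 2 * b := by rw [hsym2]; linarith [k4]
    have := mul_le_mul_of_nonneg_left hs (by positivity : (0:ℝ) ≤ Real.pi / 2)
    calc rw' * |α| ≤ Real.pi / 2 * (|rw' - rw2| + b) := k6
      _ ≤ Real.pi / 2 * (2 * b) := this
      _ = Real.pi * b := by ring
  have hM0 : 0 ≤ max a b := le_trans ha0 hmax1
  have m1 : Real.pi * a ≤ Real.pi * max a b := mul_le_mul_of_nonneg_left hmax1 hpipos.le
  have m2 : Real.pi * b ≤ Real.pi * max a b := mul_le_mul_of_nonneg_left hmax2 hpipos.le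
  have m4 : 3 * max a b ≤ Real.pi * max a b := mul_le_mul_of_nonneg_right hpi.le hM0
  have m5 : 0 ≤ Real.pi * max a b := mul_nonneg hpipos.le hM0
  linarith [k5', k6', k3, k4, m1, m2, m4, m5, hmax1, hmax2]


/-- in the model annulus `{ab = δ², |a|,|b| ≤ 1}` (0 ≤ δ < 1),
any two points `(z,w)` and `(z',w')` are joined by a pair of piecewise C¹ paths
`γ_z, γ_w` with `γ_z γ_w ≡ δ²`, staying in the closed unit disc, of total length
`ℓ(γ_z) + ℓ(γ_w) ≤ 8π·max{|z-z'|, |w-w'|}`. -/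
theorem annulus_flat_dist (δ : ℝ) (hδ0 : 0 ≤ δ) (hδ1 : δ < 1) (z w z' w' : ℂ)
    (hz : ‖z‖ ≤ 1) (hw : ‖w‖ ≤ 1)
    (hz' : ‖z'‖ ≤ 1) (hw' : ‖w'‖ ≤ 1)
    (hzw : z * w = (δ : ℂ) ^ 2) (hzw' : z' * w' = (δ : ℂ) ^ 2) :
    ∃ γz γw : ℝ → ℂ, PiecewiseC1On γz ∧ PiecewiseC1On γw ∧
      γz 0 = z ∧ γz 1 = z' ∧ γw 0 = w ∧ γw 1 = w' ∧
      (∀ t ∈ Set.Icc (0 : ℝ) 1, ‖γz t‖ ≤ 1 ∧ ‖γw t‖ ≤ 1) ∧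
      (∀ t ∈ Set.Icc (0 : ℝ) 1, γz t * γw t = (δ : ℂ) ^ 2) ∧
      pathLength γz + pathLength γw ≤
        ENNReal.ofReal (8 * Real.pi * max (‖z - z'‖) (‖w - w'‖)) := by
  rcases eq_or_lt_of_le hδ0 with h0 | hpos
  · -- degenerate case δ = 0
    have hδ' : δ = 0 := h0.symm
    subst hδ'
    have hc : ((0 : ℝ) : ℂ) ^ 2 = 0 := by norm_num
    have hz0 : z * w = 0 := by rw [hzw, hc]
    have hz0' : z' * w' = 0 := by rw [hzw', hc]
    rcases mul_eq_zero.mp hz0 with hz00 | hw00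
    · obtain ⟨γz, γw, h1, h2, h3, h4, h5, h6, h7, h8, h9⟩ :=
        aux0 z w z' w' hz hw hz' hw' hz00 (mul_eq_zero.mp hz0')
      exact ⟨γz, γw, h1, h2, h3, h4, h5, h6, h7,
        fun t ht => by rw [h8 t ht, hc], h9⟩
    · obtain ⟨γw, γz, h1, h2, h3, h4, h5, h6, h7, h8, h9⟩ :=
        aux0 w z w' z' hw hz hw' hz' hw00 ((mul_eq_zero.mp hz0').symm.imp id id)
      refine ⟨γz, γw, h2, h1, h5, h6, h3, h4,
        fun t ht => ⟨(h7 t ht).2, (h7 t ht).1⟩,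
        fun t ht => by rw [mul_comm, h8 t ht, hc], ?_⟩
      rw [add_comm, max_comm]
      exact h9
  · exact main_pos δ hpos z w z' w' hz hw hz' hw' hzw hzw'
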